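/- arXiv:1607.06890 — 2 statements merged into one kernel-verified Lean document; each statement's English description precedes it below -/
import Mathlib

section
/- Let f: ℝ^N → ℝ be convex with M-Lipschitz gradient (M > 0), bounded below, and let (q_k) be a sequence with q_{k+1} = q_k + s_k where each s_k satisfies s_k·(s_k + ε ∇f(q_k)) ≤ 0 for step-size 0 < ε < 2/M. Then Σ_{k=0}^∞ ‖s_k‖² < ∞, and consequently s_k → 0. -/
open RealInnerProductSpace Filter

lemma descent_lemma {N : ℕ} (f : EuclideanSpace ℝ (Fin N) → ℝ)
    (g : EuclideanSpace ℝ (Fin N) → EuclideanSpace ℝ (Fin N))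
    (hgrad : ∀ x, HasGradientAt f (g x) x)
    (Mc : ℝ) (hLip : ∀ x y, ‖g x - g y‖ ≤ Mc * ‖x - y‖)
    (x v : EuclideanSpace ℝ (Fin N)) :
    f (x + v) ≤ f x + ⟪g x, v⟫ + Mc / 2 * ‖v‖ ^ 2 := by
  set φ : ℝ → ℝ := fun t => f (x + t • v) - t * ⟪g x, v⟫ - Mc / 2 * t ^ 2 * ‖v‖ ^ 2 with hφ
  have hderiv : ∀ t : ℝ, HasDerivAt φ
      (⟪g (x + t • v), v⟫ - ⟪g x, v⟫ - Mc / 2 * (2 * t) * ‖v‖ ^ 2) t := by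
    intro t
    have hc : HasDerivAt (fun t : ℝ => x + t • v) v t := by
      simpa using ((hasDerivAt_id t).smul_const v).const_add x
    have h1 : HasDerivAt (fun t : ℝ => f (x + t • v)) ⟪g (x + t • v), v⟫ t := by
      have := ((hgrad (x + t • v)).hasFDerivAt).comp_hasDerivAt t hc
      simp at this; exact this
    have h2 : HasDerivAt (fun t : ℝ => t * ⟪g x, v⟫) ⟪g x, v⟫ t := by
      simpa using (hasDerivAt_id t).mul_const (⟪g x, v⟫)
    have h3 : HasDerivAt (fun t : ℝ => Mc / 2 * t ^ 2 * ‖v‖ ^ 2)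
        (Mc / 2 * (2 * t) * ‖v‖ ^ 2) t := by
      have := ((hasDerivAt_pow 2 t).const_mul (Mc / 2)).mul_const (‖v‖ ^ 2)
      simpa [mul_comm, mul_assoc] using this
    exact (h1.sub h2).sub h3
  have hmono : AntitoneOn φ (Set.Icc 0 1) := by
    apply antitoneOn_of_deriv_nonpos (convex_Icc 0 1)
    · exact Continuous.continuousOn
        (continuous_iff_continuousAt.mpr fun t => (hderiv t).differentiableAt.continuousAt)
    · intro t ht
      exact (hderiv t).differentiableAt.differentiableWithinAt
    · intro t ht
      rw [interior_Icc] at ht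
      rw [(hderiv t).deriv]
      have h1 : ⟪g (x + t • v) - g x, v⟫ ≤ Mc * t * ‖v‖ ^ 2 := by
        calc ⟪g (x + t • v) - g x, v⟫ ≤ ‖g (x + t • v) - g x‖ * ‖v‖ :=
              real_inner_le_norm _ _
          _ ≤ Mc * ‖x + t • v - x‖ * ‖v‖ := by
              gcongr; exact hLip _ _
          _ = Mc * t * ‖v‖ ^ 2 := by
              rw [add_sub_cancel_left, norm_smul, Real.norm_eq_abs,
                abs_of_pos ht.1]; ring
      have := inner_sub_left (𝕜 := ℝ) (g (x + t • v)) (g x) v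
      nlinarith [this]
  have h01 := hmono (Set.mem_Icc.mpr ⟨le_refl 0, zero_le_one⟩)
    (Set.mem_Icc.mpr ⟨zero_le_one, le_refl 1⟩) zero_le_one
  simp only [hφ, zero_smul, add_zero, one_smul, one_pow] at h01
  nlinarith [h01]

/-- For convex `f` with `M`-Lipschitz gradient, bounded below, and a sequence
`q_{k+1} = q_k + s_k` where `⟪s_k, s_k + ε ∇f(q_k)⟫ ≤ 0` with `0 < ε < 2/M`, the squared
increments are summable and `s_k → 0`. -/
theorem stmt4 {N : ℕ} (f : EuclideanSpace ℝ (Fin N) → ℝ)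
    (g : EuclideanSpace ℝ (Fin N) → EuclideanSpace ℝ (Fin N))
    (hgrad : ∀ x, HasGradientAt f (g x) x)
    (hconv : ConvexOn ℝ Set.univ f)
    (Mc : ℝ) (hMc : 0 < Mc)
    (hLip : ∀ x y, ‖g x - g y‖ ≤ Mc * ‖x - y‖)
    (hbdd : ∃ m, ∀ x, m ≤ f x)
    (ε : ℝ) (hε1 : 0 < ε) (hε2 : ε < 2 / Mc)
    (q s : ℕ → EuclideanSpace ℝ (Fin N))
    (hrec : ∀ k, q (k+1) = q k + s k)
    (hs : ∀ k, ⟪s k, s k + ε • g (q k)⟫ ≤ 0) :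
    Summable (fun k => ‖s k‖^2) ∧ Tendsto s atTop (nhds 0) := by
  obtain ⟨m, hm⟩ := hbdd
  set c : ℝ := 1 / ε - Mc / 2 with hc
  have hεMc : ε * Mc < 2 := by
    have := (lt_div_iff₀ hMc).mp hε2; linarith
  have hcpos : 0 < c := by
    rw [hc]
    have h1 : Mc / 2 < 1 / ε := by
      rw [div_lt_div_iff₀ (by norm_num) hε1]; nlinarith
    linarith
  -- per-step decrease
  have hstep : ∀ k, f (q (k+1)) ≤ f (q k) - c * ‖s k‖ ^ 2 := by
    intro k
    have hdesc := descent_lemma f g hgrad Mc hLip (q k) (s k)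
    have hinner : ‖s k‖ ^ 2 + ε * ⟪s k, g (q k)⟫ ≤ 0 := by
      have := hs k
      rwa [inner_add_right, real_inner_smul_right, real_inner_self_eq_norm_sq] at this
    have hsym : ⟪g (q k), s k⟫ = ⟪s k, g (q k)⟫ := real_inner_comm _ _
    have hX : ⟪g (q k), s k⟫ ≤ -(‖s k‖ ^ 2) / ε := by
      rw [le_div_iff₀ hε1, hsym]; nlinarith
    have heq : -(‖s k‖ ^ 2) / ε = -(1 / ε * ‖s k‖ ^ 2) := by ring
    rw [hrec k, hc]
    rw [heq] at hX
    linarith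
  -- partial sums bounded
  have hpartial : ∀ n, ∑ k ∈ Finset.range n, c * ‖s k‖ ^ 2 ≤ f (q 0) - m := by
    intro n
    have key : ∀ n, f (q n) + ∑ k ∈ Finset.range n, c * ‖s k‖ ^ 2 ≤ f (q 0) := by
      intro n
      induction n with
      | zero => simp
      | succ n ih =>
        rw [Finset.sum_range_succ]
        have := hstep n
        linarith
    have := key n
    have := hm (q n)
    linarith
  have hsummable : Summable (fun k => ‖s k‖ ^ 2) := by
    have h1 : Summable (fun k => c * ‖s k‖ ^ 2) := by
      apply summable_of_sum_range_le (c := f (q 0) - m)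
      · intro k; positivity
      · exact hpartial
    have := h1.mul_left c⁻¹
    simpa [inv_mul_cancel_left₀ (ne_of_gt hcpos)] using this
  refine ⟨hsummable, ?_⟩
  have h0 : Tendsto (fun k => ‖s k‖ ^ 2) atTop (nhds 0) := hsummable.tendsto_atTop_zero
  rw [tendsto_zero_iff_norm_tendsto_zero]
  have : Tendsto (fun k => Real.sqrt (‖s k‖ ^ 2)) atTop (nhds (Real.sqrt 0)) :=
    (Real.continuous_sqrt.tendsto 0).comp h0
  simpa [Real.sqrt_sq (norm_nonneg _)] using this
end

section
/- Under the stationary AR(1) model v̄_{k+1} = α v̄_k + η_{k+1} + c̄ with |α| < 1, noise covariance σ²I, and stationary initialization, the expected weighted squared norm of the successive difference satisfies E‖v̄_{k+1} - v̄_k‖_D² = 2σ² Tr(D)/(1+α) for every k, where ‖v‖_D² = v^T D v and D is a positive diagonal matrix. In particular this quantity is bounded uniformly in k. -/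
open MeasureTheory ProbabilityTheory

/-- Proposition 2: Under the stationary AR(1) model
`v̄_{k+1} = α v̄_k + η_{k+1} + c̄` with `|α| < 1`, noise covariance `σ² I` and stationary
initialization, the expected weighted squared successive difference satisfies
`E‖v̄_{k+1} - v̄_k‖²_D = 2σ² Tr(D)/(1+α)` for every `k`, where `D` is a positive diagonal
matrix; in particular it is uniformly bounded. -/
theorem stmt6 {N : ℕ} {Ω : Type*} [MeasureSpace Ω] [IsProbabilityMeasure (ℙ : Measure Ω)]
    (α σ : ℝ) (hα : |α| < 1) (c : Fin N → ℝ)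
    (d : Fin N → ℝ) (hd : ∀ i, 0 < d i)
    (v η : ℕ → Ω → Fin N → ℝ)
    (hmv : ∀ k, Measurable (v k)) (hmη : ∀ k, Measurable (η k))
    (hrec : ∀ k ω i, v (k+1) ω i = α * v k ω i + η (k+1) ω i + c i)
    (hindep : ∀ k, IndepFun (v k) (η (k+1)) ℙ)
    (hηint : ∀ k i, Integrable (fun ω => η (k+1) ω i))
    (hηint2 : ∀ k i j, Integrable (fun ω => η (k+1) ω i * η (k+1) ω j))
    (hηmean : ∀ k i, ∫ ω, η (k+1) ω i = 0)
    (hηcov : ∀ k i j, ∫ ω, η (k+1) ω i * η (k+1) ω j = if i = j then σ^2 else 0)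
    (hvint : ∀ k i, Integrable (fun ω => v k ω i))
    (hvint2 : ∀ k i j, Integrable (fun ω => v k ω i * v k ω j))
    -- stationarity: every v̄_k has mean c̄/(1-α) and covariance σ²/(1-α²) I
    (hmean : ∀ k i, ∫ ω, v k ω i = c i / (1 - α))
    (hcov : ∀ k i j, ∫ ω, (v k ω i - c i / (1 - α)) * (v k ω j - c j / (1 - α)) =
      if i = j then σ^2 / (1 - α^2) else 0) :
    (∀ k, ∫ ω, ∑ i, d i * (v (k+1) ω i - v k ω i)^2 = 2 * σ^2 * (∑ i, d i) / (1 + α)) ∧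
    ∃ B₁ : ℝ, ∀ k, ∫ ω, ∑ i, d i * (v (k+1) ω i - v k ω i)^2 ≤ B₁ := by
  have hα' := abs_lt.mp hα
  have h1 : (1:ℝ) - α ≠ 0 := by linarith [hα'.1, hα'.2]
  have h2 : (1:ℝ) + α ≠ 0 := by linarith [hα'.1, hα'.2]
  have h3 : (1:ℝ) - α^2 ≠ 0 := by
    have : (1:ℝ) - α^2 = (1 - α) * (1 + α) := by ring
    rw [this]; exact mul_ne_zero h1 h2
  have key : ∀ k, ∫ ω, ∑ i, d i * (v (k+1) ω i - v k ω i)^2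
      = 2 * σ^2 * (∑ i, d i) / (1 + α) := by
    intro k
    have hXint : ∀ i, Integrable (fun ω => v k ω i - c i / (1 - α)) :=
      fun i => (hvint k i).sub (integrable_const _)
    have hXmean : ∀ i, ∫ ω, (v k ω i - c i / (1 - α)) = 0 := by
      intro i
      rw [integral_sub (hvint k i) (integrable_const _), hmean, integral_const]
      simp
    have hX2int : ∀ i, Integrable (fun ω => (v k ω i - c i / (1 - α))^2) := by
      intro i
      have he : (fun ω => (v k ω i - c i / (1 - α))^2)
          = fun ω => v k ω i * v k ω i - (2 * (c i / (1 - α))) * v k ω i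
              + (c i / (1 - α)) * (c i / (1 - α)) := by
        funext ω; ring
      rw [he]
      exact ((hvint2 k i i).sub ((hvint k i).const_mul _)).add (integrable_const _)
    have hX2val : ∀ i, ∫ ω, (v k ω i - c i / (1 - α))^2 = σ^2 / (1 - α^2) := by
      intro i
      have h := hcov k i i
      simp only [if_pos rfl] at h
      simpa [pow_two] using h
    have hη2int : ∀ i, Integrable (fun ω => (η (k+1) ω i)^2) := by
      intro i
      have he : (fun ω => (η (k+1) ω i)^2) = fun ω => η (k+1) ω i * η (k+1) ω i := by
        funext ω; ring
      rw [he]; exact hηint2 k i i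
    have hη2val : ∀ i, ∫ ω, (η (k+1) ω i)^2 = σ^2 := by
      intro i
      have h := hηcov k i i
      simp only [if_pos rfl] at h
      simpa [pow_two] using h
    have hXind : ∀ i, IndepFun (fun ω => v k ω i - c i / (1 - α))
        (fun ω => η (k+1) ω i) ℙ := by
      intro i
      exact (hindep k).comp ((measurable_pi_apply i).sub measurable_const)
        (measurable_pi_apply i)
    have hXηint : ∀ i, Integrable (fun ω => (v k ω i - c i / (1 - α)) * η (k+1) ω i) :=
      fun i => (hXind i).integrable_mul (hXint i) (hηint k i)
    have hXηval : ∀ i, ∫ ω, (v k ω i - c i / (1 - α)) * η (k+1) ω i = 0 := by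
      intro i
      have h := (hXind i).integral_mul_eq_mul_integral (hXint i).aestronglyMeasurable (hηint k i).aestronglyMeasurable
      rw [show ∫ ω, (v k ω i - c i / (1 - α)) * η (k+1) ω i
          = ∫ ω, ((fun ω => v k ω i - c i / (1 - α)) * (fun ω => η (k+1) ω i)) ω from rfl,
        h, hXmean i, zero_mul]
    have hsq : ∀ i, (fun ω => (v (k+1) ω i - v k ω i)^2)
        = fun ω => (α-1)^2 * (v k ω i - c i / (1 - α))^2
            + (2*(α-1)) * ((v k ω i - c i / (1 - α)) * η (k+1) ω i)
            + (η (k+1) ω i)^2 := by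
      intro i; funext ω
      have hd' : v (k+1) ω i - v k ω i
          = (α-1) * (v k ω i - c i / (1 - α)) + η (k+1) ω i := by
        rw [hrec]; field_simp; ring
      rw [hd']; ring
    have hint : ∀ i, Integrable (fun ω => (v (k+1) ω i - v k ω i)^2) := by
      intro i
      rw [hsq i]
      exact (((hX2int i).const_mul _).add ((hXηint i).const_mul _)).add (hη2int i)
    have hterm : ∀ i, ∫ ω, (v (k+1) ω i - v k ω i)^2 = 2 * σ^2 / (1 + α) := by
      intro i
      have hABint : Integrable (fun ω => (α-1)^2 * (v k ω i - c i / (1 - α))^2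
          + (2*(α-1)) * ((v k ω i - c i / (1 - α)) * η (k+1) ω i)) ℙ :=
        ((hX2int i).const_mul ((α-1)^2)).add ((hXηint i).const_mul (2*(α-1)))
      rw [hsq i,
        integral_add hABint (hη2int i),
        integral_add ((hX2int i).const_mul ((α-1)^2)) ((hXηint i).const_mul (2*(α-1))),
        integral_const_mul, integral_const_mul, hX2val i, hXηval i, hη2val i]
      field_simp
      ring
    calc ∫ ω, ∑ i, d i * (v (k+1) ω i - v k ω i)^2
        = ∑ i, ∫ ω, d i * (v (k+1) ω i - v k ω i)^2 :=
          integral_finset_sum _ (fun i _ => (hint i).const_mul (d i))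
      _ = ∑ i, d i * (2 * σ^2 / (1 + α)) := by
          refine Finset.sum_congr rfl fun i _ => ?_
          rw [integral_const_mul, hterm i]
      _ = 2 * σ^2 * (∑ i, d i) / (1 + α) := by
          rw [← Finset.sum_mul]; field_simp
  exact ⟨key, ⟨2 * σ^2 * (∑ i, d i) / (1 + α), fun k => le_of_eq (key k)⟩⟩
end
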